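/- Let ℓ ≥ 1 and let (ℓ, G, H, ⟨≺_H, σ_H⟩) be an instance of Stack Layout Extension with V(G) = V(H). If every missing edge e ∈ E_add satisfies |S(e)| ≥ m_add, where S(e) is the set of pages p ∈ {1,…,ℓ} such that ⟨≺_H, σ_H ∪ {(e,p)}⟩ is an ℓ-page stack layout of H together with the edge e, then G admits an ℓ-page stack layout extending ⟨≺_H, σ_H⟩. -/
import Mathlib


/-- Two edges `e` and `f` alternate (cross) with respect to the vertex position
function `pos`: `e = {a, c}` and `f = {b, d}` with `pos a < pos b < pos c < pos d`. -/
def EdgesCross {V : Type*} (pos : V → ℕ) (e f : Sym2 V) : Prop :=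
  ∃ a b c d : V, e = s(a, c) ∧ f = s(b, d) ∧ pos a < pos b ∧ pos b < pos c ∧ pos c < pos d

/-- `⟨pos, σ⟩` is an `ℓ`-page stack layout of the graph with vertex set `Vs` and
edge set `Es`: `pos` induces a linear order of `Vs` and no two edges assigned to a
common page alternate. -/
def IsStackLayout {V : Type*} (ℓ : ℕ) (Vs : Finset V) (Es : Finset (Sym2 V))
    (pos : V → ℕ) (σ : Sym2 V → Fin ℓ) : Prop :=
  Set.InjOn pos ↑Vs ∧ ∀ e ∈ Es, ∀ f ∈ Es, σ e = σ f → ¬ EdgesCross pos e f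

/-- `⟨posG, σG⟩` extends `⟨posH, σH⟩`: the linear order restricted to `VH` agrees with
the order induced by `posH`, and the page assignment restricted to `EH` equals `σH`. -/
def ExtendsLayout {V : Type*} {ℓ : ℕ} (VH : Finset V) (EH : Finset (Sym2 V))
    (posH : V → ℕ) (σH : Sym2 V → Fin ℓ) (posG : V → ℕ) (σG : Sym2 V → Fin ℓ) : Prop :=
  (∀ u ∈ VH, ∀ v ∈ VH, (posH u < posH v ↔ posG u < posG v)) ∧ ∀ e ∈ EH, σG e = σH e

/-- If `V(G) = V(H)` and every missing edge `e` satisfies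
`|S(e)| ≥ m_add`, then `G` admits an `ℓ`-page stack layout extending `⟨≺_H, σ_H⟩`. -/
theorem stmt1 {V : Type*} [DecidableEq V] (ℓ : ℕ) (hℓ : 1 ≤ ℓ)
    (VH : Finset V) (EH EG : Finset (Sym2 V)) (hEHG : EH ⊆ EG)
    (hEG : ∀ e ∈ EG, ∀ x ∈ e, x ∈ VH) (hsimple : ∀ e ∈ EG, ¬ e.IsDiag)
    (posH : V → ℕ) (σH : Sym2 V → Fin ℓ)
    (hH : IsStackLayout ℓ VH EH posH σH)
    (hS : ∀ e ∈ EG, e ∉ EH → (EG \ EH).card ≤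
      Set.ncard {p : Fin ℓ | ∀ f ∈ EH, σH f = p →
        ¬ EdgesCross posH e f ∧ ¬ EdgesCross posH f e}) :
    ∃ posG σG, IsStackLayout ℓ VH EG posG σG ∧ ExtendsLayout VH EH posH σH posG σG := by
  classical
  set A := EG \ EH with hA
  -- Hall's condition setup
  let t : {e // e ∈ A} → Finset (Fin ℓ) := fun e =>
    Finset.univ.filter (fun p => ∀ f ∈ EH, σH f = p →
      ¬ EdgesCross posH e.1 f ∧ ¬ EdgesCross posH f e.1)
  have ht : ∀ e : {e // e ∈ A}, A.card ≤ (t e).card := by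
    intro e
    have hmem := Finset.mem_sdiff.mp e.2
    have hcard := hS e.1 hmem.1 hmem.2
    have hEq : {p : Fin ℓ | ∀ f ∈ EH, σH f = p →
        ¬ EdgesCross posH e.1 f ∧ ¬ EdgesCross posH f e.1}.ncard = (t e).card := by
      rw [Set.ncard_eq_toFinset_card']
      congr 1
      ext p
      simp [t]
    omega
  have hall : ∀ s : Finset {e // e ∈ A}, s.card ≤ (s.biUnion t).card := by
    intro s
    rcases s.eq_empty_or_nonempty with rfl | ⟨x, hx⟩
    · simp
    · calc s.card ≤ A.card := by
            have h1 : s.card ≤ (Finset.univ : Finset {e // e ∈ A}).card :=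
              Finset.card_le_card (Finset.subset_univ s)
            simpa [Fintype.card_coe] using h1
        _ ≤ (t x).card := ht x
        _ ≤ (s.biUnion t).card :=
            Finset.card_le_card (fun p hp => Finset.mem_biUnion.mpr ⟨x, hx, hp⟩)
  obtain ⟨φ, hφinj, hφmem⟩ := (Finset.all_card_le_biUnion_card_iff_exists_injective t).mp hall
  have hφprop : ∀ e : {e // e ∈ A}, ∀ f ∈ EH, σH f = φ e →
      ¬ EdgesCross posH e.1 f ∧ ¬ EdgesCross posH f e.1 := by
    intro e
    have := hφmem e
    simpa [t] using this
  have notself : ∀ e : Sym2 V, ¬ EdgesCross posH e e := by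
    rintro e ⟨a, b, c, d, he, hf, h1, h2, h3⟩
    rw [he, Sym2.eq_iff] at hf
    rcases hf with ⟨rfl, rfl⟩ | ⟨rfl, rfl⟩ <;> omega
  refine ⟨posH, fun e => if h : e ∈ A then φ ⟨e, h⟩ else σH e, ⟨hH.1, ?_⟩,
    fun u _ v _ => Iff.rfl, fun e he => by
      have : e ∉ A := by simp [hA, Finset.mem_sdiff, he]
      simp [this]⟩
  intro e heG f hfG hσ
  by_cases he : e ∈ EH <;> by_cases hf : f ∈ EH
  · have heA : e ∉ A := by simp [hA, Finset.mem_sdiff, he]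
    have hfA : f ∉ A := by simp [hA, Finset.mem_sdiff, hf]
    simp only [dif_neg heA, dif_neg hfA] at hσ
    exact hH.2 e he f hf hσ
  · have heA : e ∉ A := by simp [hA, Finset.mem_sdiff, he]
    have hfA : f ∈ A := Finset.mem_sdiff.mpr ⟨hfG, hf⟩
    simp only [dif_neg heA, dif_pos hfA] at hσ
    exact (hφprop ⟨f, hfA⟩ e he hσ).2
  · have heA : e ∈ A := Finset.mem_sdiff.mpr ⟨heG, he⟩
    have hfA : f ∉ A := by simp [hA, Finset.mem_sdiff, hf]
    simp only [dif_pos heA, dif_neg hfA] at hσ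
    exact (hφprop ⟨e, heA⟩ f hf hσ.symm).1
  · have heA : e ∈ A := Finset.mem_sdiff.mpr ⟨heG, he⟩
    have hfA : f ∈ A := Finset.mem_sdiff.mpr ⟨hfG, hf⟩
    simp only [dif_pos heA, dif_pos hfA] at hσ
    have : e = f := congrArg Subtype.val (hφinj hσ)
    subst this
    exact notself e
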